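/- Assume $\Omega$ is convex, $A \equiv I$, $\Gamma_A = \emptyset$, and the interpolation estimate $\min_{v_h \in \mathscr{V}_h}\|\nabla(v - v_h)\|_\Omega \le C_i h_{\max}\|\nabla^2 v\|_\Omega$ holds for $v \in \mathscr{H}^2(\Omega) \cap \mathscr{H}^1_0(\Omega)$, together with the elliptic regularity identity $\|\nabla^2 w\|_\Omega = \|\Delta w\|_\Omega$ for $w \in \mathscr{H}^2 \cap \mathscr{H}^1_0(\Omega)$. Then for $s \in \mathbb{C}$ with $\rho = \Re s > 0$, the approximation factor satisfies $\hat\gamma_{s,h} \le 2 C_i (|s|/\rho)(|s| h_{\max}/\vartheta_{\min})$. -/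

import Mathlib

/- STATEMENT 7: convex-domain bound on the approximation factor,
`γ̂_{s,h} ≤ 2 C_i (|s|/ρ)(|s| h_max/ϑ_min)`, when `A ≡ I` and `Γ_A = ∅`.
Abstract setting: `Mμ v ≈ √μ v` (so `{φ}_{H¹_s} = |s| ‖Mμ φ‖` since Γ_A = ∅),
`G v ≈ ∇v`, `Δop w ≈ Δw ∈ L²(Ω)`, `D2 w = ‖∇²w‖_Ω`, `Mw w ≈ μ w ∈ L²(Ω)`.
Hypotheses: interpolation estimate, elliptic regularity `‖∇²w‖ = ‖Δw‖`,
the adjoint PDE `-Δ S⋆φ = s²μ φ - s²μ S⋆φ`, the weight bound `μ ≤ ϑ_min⁻²`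
(i.e. `‖μ w‖_Ω ≤ ϑ_min⁻¹ ‖√μ w‖_Ω`), and the adjoint stability bound. -/

open scoped ComplexInnerProductSpace

theorem stmt7
    {V Eμ Eg E0 : Type*} [AddCommGroup V] [Module ℂ V]
    [NormedAddCommGroup Eμ] [InnerProductSpace ℂ Eμ]
    [NormedAddCommGroup Eg] [InnerProductSpace ℂ Eg]
    [NormedAddCommGroup E0] [InnerProductSpace ℂ E0]
    (Mμ : V →ₗ[ℂ] Eμ) (G : V →ₗ[ℂ] Eg) (Δop : V →ₗ[ℂ] E0) (Mw : V →ₗ[ℂ] E0)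
    (D2 : V → ℝ)
    (s : ℂ) (ρ : ℝ) (hρ : ρ = s.re) (hρpos : 0 < ρ)
    (Ci hmax ϑmin : ℝ) (hCi : 0 ≤ Ci) (hhmax : 0 ≤ hmax) (hϑ : 0 < ϑmin)
    (Vh : Submodule ℂ V)
    (Sstar : V → V)
    -- interpolation estimate (Ω convex, A ≡ I):
    (hinterp : ∀ w : V, ∃ vh ∈ Vh, ‖G (w - vh)‖ ≤ Ci * hmax * D2 w)
    -- elliptic regularity identity ‖∇²w‖ = ‖Δw‖:
    (hellreg : ∀ w : V, D2 w = ‖Δop w‖)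
    -- adjoint equation: -Δ S⋆φ = s² μ φ - s² μ S⋆φ:
    (hPDE : ∀ φ : V, Δop (Sstar φ) = s ^ 2 • Mw (Sstar φ) - s ^ 2 • Mw φ)
    -- μ ≤ ϑ_min⁻² :
    (hweight : ∀ w : V, ‖Mw w‖ ≤ ϑmin⁻¹ * ‖Mμ w‖)
    -- stability of the adjoint solution: |s|‖S⋆φ‖_μ ≤ (|s|/ρ) {φ}_{H¹_s}:
    (hstab : ∀ φ : V, ‖s‖ * ‖Mμ (Sstar φ)‖ ≤
      (‖s‖ / ρ) * (‖s‖ * ‖Mμ φ‖)) :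
    ∀ φ : V, ∃ vh ∈ Vh,
      ‖G (Sstar φ - vh)‖ ≤
        2 * Ci * (‖s‖ / ρ) * (‖s‖ * hmax / ϑmin)
          * (‖s‖ * ‖Mμ φ‖) := by
  intro φ
  obtain ⟨vh, hvh, hle⟩ := hinterp (Sstar φ)
  refine ⟨vh, hvh, ?_⟩
  have habs : (0:ℝ) < ‖s‖ := lt_of_lt_of_le hρpos (hρ ▸ (le_trans (le_abs_self _) (Complex.abs_re_le_norm s)))
  have hρle : ρ ≤ ‖s‖ := hρ ▸ (le_trans (le_abs_self _) (Complex.abs_re_le_norm s))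
  -- bound on ‖Δop (Sstar φ)‖
  have hΔ : ‖Δop (Sstar φ)‖ ≤
      ‖s‖ ^ 2 * (‖Mw (Sstar φ)‖ + ‖Mw φ‖) := by
    rw [hPDE φ]
    calc ‖s ^ 2 • Mw (Sstar φ) - s ^ 2 • Mw φ‖
        ≤ ‖s ^ 2 • Mw (Sstar φ)‖ + ‖s ^ 2 • Mw φ‖ := norm_sub_le _ _
      _ = ‖s‖ ^ 2 * (‖Mw (Sstar φ)‖ + ‖Mw φ‖) := by
          simp [norm_smul, mul_add, Complex.norm_def]
  have hMμS : ‖Mμ (Sstar φ)‖ ≤ (‖s‖ / ρ) * ‖Mμ φ‖ := by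
    have := hstab φ
    have h : ‖s‖ * ‖Mμ (Sstar φ)‖ ≤
        ‖s‖ * ((‖s‖ / ρ) * ‖Mμ φ‖) := by
      calc ‖s‖ * ‖Mμ (Sstar φ)‖
          ≤ (‖s‖ / ρ) * (‖s‖ * ‖Mμ φ‖) := this
        _ = ‖s‖ * ((‖s‖ / ρ) * ‖Mμ φ‖) := by ring
    exact le_of_mul_le_mul_left h habs
  have hMμφ : ‖Mμ φ‖ ≤ (‖s‖ / ρ) * ‖Mμ φ‖ := by
    nlinarith [norm_nonneg (Mμ φ), (one_le_div hρpos).mpr hρle]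
  have key : ‖G (Sstar φ - vh)‖ ≤
      Ci * hmax * (‖s‖ ^ 2 * (ϑmin⁻¹ * (‖Mμ (Sstar φ)‖ + ‖Mμ φ‖))) := by
    refine hle.trans ?_
    rw [hellreg]
    have h1 : ‖Mw (Sstar φ)‖ + ‖Mw φ‖ ≤ ϑmin⁻¹ * (‖Mμ (Sstar φ)‖ + ‖Mμ φ‖) := by
      rw [mul_add]; exact add_le_add (hweight _) (hweight _)
    have h2 : ‖Δop (Sstar φ)‖ ≤
        ‖s‖ ^ 2 * (ϑmin⁻¹ * (‖Mμ (Sstar φ)‖ + ‖Mμ φ‖)) :=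
      hΔ.trans (mul_le_mul_of_nonneg_left h1 (sq_nonneg _))
    exact mul_le_mul_of_nonneg_left h2 (mul_nonneg hCi hhmax)
  refine key.trans ?_
  have hsum : ‖Mμ (Sstar φ)‖ + ‖Mμ φ‖ ≤ 2 * ((‖s‖ / ρ) * ‖Mμ φ‖) := by
    linarith
  have hinv : (0:ℝ) ≤ ϑmin⁻¹ := le_of_lt (inv_pos.mpr hϑ)
  have goal_eq : 2 * Ci * (‖s‖ / ρ) * (‖s‖ * hmax / ϑmin)
      * (‖s‖ * ‖Mμ φ‖)
      = Ci * hmax * (‖s‖ ^ 2 * (ϑmin⁻¹ * (2 * ((‖s‖ / ρ) * ‖Mμ φ‖)))) := by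
    field_simp
  rw [goal_eq]
  have : ϑmin⁻¹ * (‖Mμ (Sstar φ)‖ + ‖Mμ φ‖) ≤
      ϑmin⁻¹ * (2 * ((‖s‖ / ρ) * ‖Mμ φ‖)) :=
    mul_le_mul_of_nonneg_left hsum hinv
  exact mul_le_mul_of_nonneg_left (mul_le_mul_of_nonneg_left this (sq_nonneg _)) (mul_nonneg hCi hhmax)
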